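/- Let G be a connected r-regular graph on n vertices with λ < 1, let 0 < ρ ≤ 1, and consider the BIPS process on G with source v and expected branching factor 1 + ρ. Then for every set A ⊆ V with v ∈ A and every t ≥ 0, E(|A_{t+1}| | A_t = A) ≥ |A|·(1 + ρ·(1 − λ²)·(1 − |A|/n)). -/

import Mathlib

open Finset

noncomputable section

variable {V : Type*}

/-- The random-walk transition matrix `P = A(G)/r` of a graph `G`. -/
def transMatrix [Fintype V] (G : SimpleGraph V) [DecidableRel G.Adj] (r : ℕ) :
    Matrix V V ℝ :=
  Matrix.of fun x y => if G.Adj x y then (r : ℝ)⁻¹ else 0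

/-- `λ = max_{i ≥ 2} |λ_i|`: the largest absolute value of an eigenvalue of the
transition matrix on the space orthogonal to the constant vectors.  For a connected
regular graph this is exactly the second largest eigenvalue in absolute value. -/
def secondEigen [Fintype V] (G : SimpleGraph V) [DecidableRel G.Adj] (r : ℕ) : ℝ :=
  sSup {y : ℝ | ∃ (μ : ℝ) (f : V → ℝ), y = |μ| ∧ f ≠ 0 ∧ (∑ x, f x) = 0 ∧
    (transMatrix G r).mulVec f = μ • f}

/-- `d_A(x) = |N(x) ∩ A|`. -/
def degIn [Fintype V] [DecidableEq V] (G : SimpleGraph V) [DecidableRel G.Adj]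
    (A : Finset V) (x : V) : ℕ :=
  (G.neighborFinset x ∩ A).card

/-- Probability that a vertex `u` choosing `k` uniform random neighbours (with
replacement) in an `r`-regular graph hits the set `A` at least once. -/
def pInf [Fintype V] [DecidableEq V] (G : SimpleGraph V) [DecidableRel G.Adj]
    (r k : ℕ) (A : Finset V) (u : V) : ℝ :=
  1 - (1 - (degIn G A u : ℝ) / (r : ℝ)) ^ k

/-- One-step transition probability of the BIPS process with source `v` and parameter `k`:
each `u ≠ v` is independently infected with probability `pInf`, and `v` is always infected. -/
def bipsStep [Fintype V] [DecidableEq V] (G : SimpleGraph V) [DecidableRel G.Adj]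
    (r k : ℕ) (v : V) (A B : Finset V) : ℝ :=
  if v ∈ B then
    ∏ u ∈ Finset.univ.erase v, (if u ∈ B then pInf G r k A u else 1 - pInf G r k A u)
  else 0

/-- Marginal distribution at time `t` of the Markov chain with one-step transition
probabilities `step` started at `A₀`. -/
def chainProb [Fintype V] [DecidableEq V] (step : Finset V → Finset V → ℝ)
    (A₀ : Finset V) : ℕ → Finset V → ℝ
  | 0, B => if B = A₀ then 1 else 0
  | (t+1), B => ∑ A : Finset V, chainProb step A₀ t A * step A B

/-- Probability of the trajectory `ω 0, ω 1, …, ω T` for the Markov chain with one-step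
transition probabilities `step` started at `A₀`. -/
def trajProb [DecidableEq V] (step : Finset V → Finset V → ℝ) (A₀ : Finset V) (T : ℕ)
    (ω : Fin (T+1) → Finset V) : ℝ :=
  (if ω 0 = A₀ then (1:ℝ) else 0) * ∏ i : Fin T, step (ω i.castSucc) (ω i.succ)

open scoped Classical in
/-- Probability that the trajectory `(A_0, …, A_T)` of the chain satisfies `Q`. -/
def trajPr [Fintype V] [DecidableEq V] (step : Finset V → Finset V → ℝ)
    (A₀ : Finset V) (T : ℕ) (Q : (Fin (T+1) → Finset V) → Prop) : ℝ :=
  ∑ ω : Fin (T+1) → Finset V, if Q ω then trajProb step A₀ T ω else 0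

open scoped Classical in
/-- One-step transition probability of the COBRA process with branching factor `k`:
every vertex of `C` chooses `k` neighbours independently and uniformly at random with
replacement, and `B` is the set of all chosen vertices. -/
def cobraStep [Fintype V] [DecidableEq V] (G : SimpleGraph V) [DecidableRel G.Adj]
    (k : ℕ) (C B : Finset V) : ℝ :=
  ∑ f : ↥C → Fin k → V,
    if (∀ x : ↥C, ∀ i : Fin k, G.Adj (x : V) (f x i)) ∧
        B = Finset.image (fun p : ↥C × Fin k => f p.1 p.2) Finset.univ then
      ∏ x : ↥C, ((G.degree (x : V) : ℝ)⁻¹) ^ k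
    else 0

/-- `Pr(cov(u) > T)`: probability that after `T` rounds of the COBRA process started at
`C_0 = {u}` the sets `C_1, …, C_T` have not yet covered all vertices. -/
def prCovGT [Fintype V] [DecidableEq V] (G : SimpleGraph V) [DecidableRel G.Adj]
    (k : ℕ) (u : V) (T : ℕ) : ℝ :=
  trajPr (cobraStep G k) {u} T (fun ω => ∃ x : V, ∀ s : Fin (T+1), s ≠ 0 → x ∉ ω s)

/-- `Pr(infec(v) > T)`: probability that after `T` rounds of the BIPS process with
source `v` (started from `A_0 = {v}`) the infected set is not yet the whole vertex set. -/
def prInfecGT [Fintype V] [DecidableEq V] (G : SimpleGraph V) [DecidableRel G.Adj]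
    (r k : ℕ) (v : V) (T : ℕ) : ℝ :=
  trajPr (bipsStep G r k v) {v} T (fun ω => ∀ s : Fin (T+1), ω s ≠ Finset.univ)

/-- Probability that a vertex `u` hits `A` when it chooses one uniform random neighbour,
and then with probability `ρ` a second (independent, uniform) neighbour. -/
def pInfRho [Fintype V] [DecidableEq V] (G : SimpleGraph V) [DecidableRel G.Adj]
    (r : ℕ) (ρ : ℝ) (A : Finset V) (u : V) : ℝ :=
  1 - (1 - (degIn G A u : ℝ) / (r : ℝ)) * (1 - ρ * (degIn G A u : ℝ) / (r : ℝ))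

/-- One-step transition probability of the BIPS process with expected branching factor
`1 + ρ` and source `v`. -/
def bipsRhoStep [Fintype V] [DecidableEq V] (G : SimpleGraph V) [DecidableRel G.Adj]
    (r : ℕ) (ρ : ℝ) (v : V) (A B : Finset V) : ℝ :=
  if v ∈ B then
    ∏ u ∈ Finset.univ.erase v,
      (if u ∈ B then pInfRho G r ρ A u else 1 - pInfRho G r ρ A u)
  else 0

open scoped Classical in
/-- One-step transition probability of the COBRA process with expected branching factor
`1 + ρ`: each vertex of `C` chooses one uniform random neighbour and, independently with
probability `ρ`, a second uniform random neighbour; `B` is the set of all chosen vertices. -/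
def cobraRhoStep [Fintype V] [DecidableEq V] (G : SimpleGraph V) [DecidableRel G.Adj]
    (ρ : ℝ) (C B : Finset V) : ℝ :=
  ∑ f : ↥C → V, ∑ g : ↥C → Option V,
    if (∀ x : ↥C, G.Adj (x : V) (f x)) ∧
        (∀ x : ↥C, ∀ y : V, g x = some y → G.Adj (x : V) y) ∧
        B = Finset.image f Finset.univ ∪
          Finset.univ.biUnion (fun x : ↥C => (g x).toFinset) then
      ∏ x : ↥C, ((G.degree (x : V) : ℝ)⁻¹ *
        Option.elim (g x) (1 - ρ) (fun _ => ρ * (G.degree (x : V) : ℝ)⁻¹))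
    else 0

/-- `Pr(cov(u) > T)` for the COBRA process with expected branching factor `1 + ρ`. -/
def prCovRhoGT [Fintype V] [DecidableEq V] (G : SimpleGraph V) [DecidableRel G.Adj]
    (ρ : ℝ) (u : V) (T : ℕ) : ℝ :=
  trajPr (cobraRhoStep G ρ) {u} T (fun ω => ∃ x : V, ∀ s : Fin (T+1), s ≠ 0 → x ∉ ω s)

end


section BipsAux
open Finset
variable {V : Type*} [Fintype V] [DecidableEq V]

private lemma bern_total (p : V → ℝ) (T : Finset V) :
    ∑ S ∈ T.powerset, ∏ u ∈ T, (if u ∈ S then p u else 1 - p u) = 1 := by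
  induction T using Finset.induction_on with
  | empty => simp
  | @insert a s ha ih =>
    rw [Finset.sum_powerset_insert ha]
    have h1 : ∀ S ∈ s.powerset, (∏ u ∈ insert a s, (if u ∈ S then p u else 1 - p u))
        = (1 - p a) * ∏ u ∈ s, (if u ∈ S then p u else 1 - p u) := by
      intro S hS
      rw [Finset.prod_insert ha, if_neg (fun h => ha (Finset.mem_powerset.mp hS h))]
    have h2 : ∀ S ∈ s.powerset, (∏ u ∈ insert a s, (if u ∈ insert a S then p u else 1 - p u))
        = p a * ∏ u ∈ s, (if u ∈ S then p u else 1 - p u) := by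
      intro S hS
      rw [Finset.prod_insert ha, if_pos (Finset.mem_insert_self a S)]
      congr 1
      refine Finset.prod_congr rfl fun u hu => ?_
      have hne : u ≠ a := fun h => ha (h ▸ hu)
      exact if_congr (by simp [Finset.mem_insert, hne]) rfl rfl
    rw [Finset.sum_congr rfl h1, Finset.sum_congr rfl h2, ← Finset.mul_sum, ← Finset.mul_sum, ih]
    ring

private lemma bern_card (p : V → ℝ) (T : Finset V) :
    ∑ S ∈ T.powerset, (∏ u ∈ T, (if u ∈ S then p u else 1 - p u)) * (S.card : ℝ)
      = ∑ u ∈ T, p u := by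
  induction T using Finset.induction_on with
  | empty => simp
  | @insert a s ha ih =>
    rw [Finset.sum_powerset_insert ha]
    have h1 : ∀ S ∈ s.powerset, (∏ u ∈ insert a s, (if u ∈ S then p u else 1 - p u)) * (S.card : ℝ)
        = (1 - p a) * ((∏ u ∈ s, (if u ∈ S then p u else 1 - p u)) * (S.card : ℝ)) := by
      intro S hS
      rw [Finset.prod_insert ha, if_neg (fun h => ha (Finset.mem_powerset.mp hS h)), mul_assoc]
    have h2 : ∀ S ∈ s.powerset,
        (∏ u ∈ insert a s, (if u ∈ insert a S then p u else 1 - p u)) * ((insert a S).card : ℝ)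
        = p a * ((∏ u ∈ s, (if u ∈ S then p u else 1 - p u)) * (S.card : ℝ))
          + p a * (∏ u ∈ s, (if u ∈ S then p u else 1 - p u)) := by
      intro S hS
      have haS : a ∉ S := fun h => ha (Finset.mem_powerset.mp hS h)
      rw [Finset.prod_insert ha, if_pos (Finset.mem_insert_self a S),
        Finset.card_insert_of_notMem haS]
      have : (∏ u ∈ s, (if u ∈ insert a S then p u else 1 - p u))
          = ∏ u ∈ s, (if u ∈ S then p u else 1 - p u) := by
        refine Finset.prod_congr rfl fun u hu => ?_
        have hne : u ≠ a := fun h => ha (h ▸ hu)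
        exact if_congr (by simp [Finset.mem_insert, hne]) rfl rfl
      rw [this]
      push_cast
      ring
    rw [Finset.sum_congr rfl h1, Finset.sum_congr rfl h2, ← Finset.mul_sum,
      Finset.sum_add_distrib, ← Finset.mul_sum, ← Finset.mul_sum, ih, bern_total,
      Finset.sum_insert ha]
    ring

lemma bips_exp (G : SimpleGraph V) [DecidableRel G.Adj] (r : ℕ) (ρ : ℝ) (v : V) (A : Finset V) :
    ∑ B : Finset V, bipsRhoStep G r ρ v A B * (B.card : ℝ)
      = 1 + ∑ u ∈ univ.erase v, pInfRho G r ρ A u := by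
  set p : V → ℝ := pInfRho G r ρ A with hp
  have hv' : v ∉ univ.erase v := notMem_erase v univ
  have huniv : insert v (univ.erase v) = (univ : Finset V) := insert_erase (mem_univ v)
  have step1 : ∑ B : Finset V, bipsRhoStep G r ρ v A B * (B.card : ℝ)
      = ∑ B ∈ (insert v (univ.erase v)).powerset, bipsRhoStep G r ρ v A B * (B.card : ℝ) := by
    rw [huniv, Finset.powerset_univ]
  rw [step1, Finset.sum_powerset_insert hv']
  have hz : ∀ S ∈ (univ.erase v).powerset, bipsRhoStep G r ρ v A S * (S.card : ℝ) = 0 := by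
    intro S hS
    have : v ∉ S := fun h => hv' (Finset.mem_powerset.mp hS h)
    rw [bipsRhoStep, if_neg this, zero_mul]
  have hw : ∀ S ∈ (univ.erase v).powerset,
      bipsRhoStep G r ρ v A (insert v S) * ((insert v S).card : ℝ)
      = (∏ u ∈ univ.erase v, (if u ∈ S then p u else 1 - p u)) * (S.card : ℝ)
        + (∏ u ∈ univ.erase v, (if u ∈ S then p u else 1 - p u)) := by
    intro S hS
    have hvS : v ∉ S := fun h => hv' (Finset.mem_powerset.mp hS h)
    rw [bipsRhoStep, if_pos (Finset.mem_insert_self v S), Finset.card_insert_of_notMem hvS]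
    have : (∏ u ∈ univ.erase v, (if u ∈ insert v S then p u else 1 - p u))
        = ∏ u ∈ univ.erase v, (if u ∈ S then p u else 1 - p u) := by
      refine Finset.prod_congr rfl fun u hu => ?_
      have hne : u ≠ v := (Finset.mem_erase.mp hu).1
      exact if_congr (by simp [Finset.mem_insert, hne]) rfl rfl
    rw [this]
    push_cast
    ring
  rw [Finset.sum_congr rfl hz, Finset.sum_congr rfl hw, Finset.sum_const_zero,
    Finset.sum_add_distrib, bern_card, bern_total]
  ring

end BipsAux

section SpecAux
open Finset
variable {V : Type*} [Fintype V] [DecidableEq V]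
variable (G : SimpleGraph V) [DecidableRel G.Adj] (r : ℕ)

private lemma tm_apply (x y : V) :
    transMatrix G r x y = if G.Adj x y then (r : ℝ)⁻¹ else 0 := rfl

private lemma tm_nonneg (x y : V) : 0 ≤ transMatrix G r x y := by
  rw [tm_apply]; split <;> positivity

private lemma tm_symm (x y : V) : transMatrix G r x y = transMatrix G r y x := by
  rw [tm_apply, tm_apply]
  simp [G.adj_comm]

private lemma tm_herm : (transMatrix G r).IsHermitian := by
  ext x y
  simp [Matrix.conjTranspose_apply, tm_symm G r y x]

private lemma tm_mulVec (f : V → ℝ) (x : V) :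
    (transMatrix G r).mulVec f x = ∑ y, transMatrix G r x y * f y := by
  simp [Matrix.mulVec, dotProduct]

private lemma tm_rowsum (hreg : G.IsRegularOfDegree r) (hr : 0 < r) (x : V) :
    ∑ y, transMatrix G r x y = 1 := by
  simp only [tm_apply]
  rw [← Finset.sum_filter, ← SimpleGraph.neighborFinset_eq_filter, Finset.sum_const,
    nsmul_eq_mul]
  rw [show (G.neighborFinset x).card = r from hreg x]
  rw [mul_inv_cancel₀ (by exact_mod_cast hr.ne')]

private lemma tm_rowsum_le (hreg : G.IsRegularOfDegree r) (x : V) :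
    ∑ y, transMatrix G r x y ≤ 1 := by
  rcases Nat.eq_zero_or_pos r with h | h
  · subst h
    simp [tm_apply]
  · rw [tm_rowsum G r hreg h x]

private lemma eigen_abs_le_one (hreg : G.IsRegularOfDegree r) {μ : ℝ} {f : V → ℝ}
    (hf : f ≠ 0) (heig : (transMatrix G r).mulVec f = μ • f) : |μ| ≤ 1 := by
  have hne : (univ : Finset V).Nonempty := by
    obtain ⟨x, -⟩ := Function.ne_iff.mp hf
    exact ⟨x, mem_univ x⟩
  obtain ⟨x₀, -, hx₀⟩ := Finset.exists_max_image univ (fun y => |f y|) hne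
  have hx₀' : ∀ y, |f y| ≤ |f x₀| := fun y => hx₀ y (mem_univ y)
  have hfx : 0 < |f x₀| := by
    obtain ⟨x, hx⟩ := Function.ne_iff.mp hf
    exact lt_of_lt_of_le (abs_pos.mpr hx) (hx₀' x)
  have key : |μ| * |f x₀| ≤ 1 * |f x₀| := by
    have h1 : |μ| * |f x₀| = |(transMatrix G r).mulVec f x₀| := by
      rw [heig]; simp [abs_mul]
    rw [h1, tm_mulVec]
    calc |∑ y, transMatrix G r x₀ y * f y| ≤ ∑ y, |transMatrix G r x₀ y * f y| :=
          Finset.abs_sum_le_sum_abs _ _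
      _ ≤ ∑ y, transMatrix G r x₀ y * |f x₀| := by
          refine Finset.sum_le_sum fun y _ => ?_
          rw [abs_mul, abs_of_nonneg (tm_nonneg G r x₀ y)]
          exact mul_le_mul_of_nonneg_left (hx₀' y) (tm_nonneg G r x₀ y)
      _ = (∑ y, transMatrix G r x₀ y) * |f x₀| := by rw [Finset.sum_mul]
      _ ≤ 1 * |f x₀| :=
          mul_le_mul_of_nonneg_right (tm_rowsum_le G r hreg x₀) (abs_nonneg _)
  exact le_of_mul_le_mul_right (by simpa using key) hfx

private lemma eigenSet_bdd (hreg : G.IsRegularOfDegree r) :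
    BddAbove {y : ℝ | ∃ (μ : ℝ) (f : V → ℝ), y = |μ| ∧ f ≠ 0 ∧ (∑ x, f x) = 0 ∧
      (transMatrix G r).mulVec f = μ • f} := by
  refine ⟨1, fun y hy => ?_⟩
  obtain ⟨μ, f, rfl, hf, -, heig⟩ := hy
  exact eigen_abs_le_one G r hreg hf heig

private lemma euc_sum_apply {ι : Type*} (s : Finset ι) (g : ι → EuclideanSpace ℝ V) (x : V) :
    (∑ i ∈ s, g i) x = ∑ i ∈ s, g i x := by
  induction s using Finset.cons_induction with
  | empty => rfl
  | cons a s ha ih => rw [Finset.sum_cons, Finset.sum_cons, PiLp.add_apply, ih]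

private lemma parseval_aux (b : V → V → ℝ)
    (ortho : ∀ i j, ∑ x, b i x * b j x = if i = j then (1:ℝ) else 0) (w : V → ℝ) :
    ∑ x, (∑ j, w j * b j x)^2 = ∑ j, (w j)^2 := by
  calc ∑ x, (∑ j, w j * b j x)^2
      = ∑ x, ∑ j, ∑ k, (w j * b j x) * (w k * b k x) := by
        refine Finset.sum_congr rfl fun x _ => ?_
        rw [pow_two, Finset.sum_mul_sum]
    _ = ∑ j, ∑ k, (w j * w k) * ∑ x, b j x * b k x := by
        rw [Finset.sum_comm]
        refine Finset.sum_congr rfl fun j _ => ?_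
        rw [Finset.sum_comm]
        refine Finset.sum_congr rfl fun k _ => ?_
        rw [Finset.mul_sum]
        exact Finset.sum_congr rfl fun x _ => by ring
    _ = ∑ j, (w j)^2 := by
        refine Finset.sum_congr rfl fun j _ => ?_
        rw [Finset.sum_eq_single j]
        · rw [ortho j j, if_pos rfl]; ring
        · intro k _ hk
          rw [ortho j k, if_neg (fun h => hk h.symm), mul_zero]
        · intro h; exact absurd (mem_univ j) h

lemma spectral_bound [Nonempty V] (hreg : G.IsRegularOfDegree r) (hr : 0 < r)
    (hlam : secondEigen G r < 1) (f : V → ℝ) (hf : ∑ x, f x = 0) :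
    ∑ x, ((transMatrix G r).mulVec f x)^2 ≤ (secondEigen G r)^2 * ∑ x, (f x)^2 := by
  classical
  set P := transMatrix G r with hP
  have hH : P.IsHermitian := tm_herm G r
  set b := hH.eigenvectorBasis with hb
  set μ := hH.eigenvalues with hμ
  have heigvec : ∀ j, P.mulVec (b j) = μ j • ⇑(b j) := fun j => hH.mulVec_eigenvectorBasis j
  have ortho : ∀ i j, ∑ x, b i x * b j x = if i = j then (1:ℝ) else 0 := by
    intro i j
    have := orthonormal_iff_ite.mp b.orthonormal i j
    simp [PiLp.inner_apply, RCLike.inner_apply] at this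
    rw [← this]
    exact Finset.sum_congr rfl fun x _ => mul_comm _ _
  set c : V → ℝ := fun j => ∑ x, b j x * f x with hc
  -- decomposition of f in the eigenbasis
  have hdecomp : ∀ x, f x = ∑ j, c j * b j x := by
    intro x
    have h := b.sum_repr' (WithLp.toLp 2 f)
    have h2 : (∑ i, (inner ℝ (b i) (WithLp.toLp 2 f) : ℝ) • b i) x = f x := by rw [h]
    rw [euc_sum_apply] at h2
    rw [← h2]
    refine Finset.sum_congr rfl fun j _ => ?_
    have hinner : (inner ℝ (b j) (WithLp.toLp 2 f) : ℝ) = c j := by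
      simp [PiLp.inner_apply, RCLike.inner_apply, hc, mul_comm]
    rw [PiLp.smul_apply, hinner, smul_eq_mul]
  have hmul : ∀ x, P.mulVec f x = ∑ j, (c j * μ j) * b j x := by
    intro x
    rw [tm_mulVec]
    calc ∑ y, P x y * f y = ∑ y, ∑ j, P x y * (c j * b j y) := by
          refine Finset.sum_congr rfl fun y _ => ?_
          rw [hdecomp y, Finset.mul_sum]
      _ = ∑ j, ∑ y, P x y * (c j * b j y) := Finset.sum_comm
      _ = ∑ j, c j * (∑ y, P x y * b j y) := by
          refine Finset.sum_congr rfl fun j _ => ?_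
          rw [Finset.mul_sum]
          exact Finset.sum_congr rfl fun y _ => by ring
      _ = ∑ j, (c j * μ j) * b j x := by
          refine Finset.sum_congr rfl fun j _ => ?_
          have := congrFun (heigvec j) x
          rw [tm_mulVec] at this
          rw [this]
          simp only [Pi.smul_apply, PiLp.smul_apply, smul_eq_mul]
          ring
  -- column sums are 1
  have hcol : ∀ y, ∑ x, P x y = 1 := by
    intro y
    rw [Finset.sum_congr rfl fun x _ => tm_symm G r x y]
    exact tm_rowsum G r hreg hr y
  have hcard : (0:ℝ) < (Fintype.card V : ℝ) := by
    exact_mod_cast Fintype.card_pos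
  -- eigenvalue bound for each coordinate appearing in f
  have habs : ∀ j, c j ≠ 0 → (μ j)^2 ≤ (secondEigen G r)^2 := by
    intro j hcj
    have hbj : (⇑(b j) : V → ℝ) ≠ 0 := by
      intro h0
      have h1 : ‖b j‖ = 1 := b.orthonormal.1 j
      have : (b j : EuclideanSpace ℝ V) = 0 := by
        ext x
        exact congrFun h0 x
      rw [this] at h1
      simp at h1
    by_cases hμ1 : μ j = 1
    · exfalso
      apply hcj
      set s : ℝ := (∑ y, b j y) / (Fintype.card V : ℝ) with hs
      set g : V → ℝ := fun x => b j x - s with hg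
      have hgsum : ∑ x, g x = 0 := by
        simp only [hg, Finset.sum_sub_distrib, Finset.sum_const, nsmul_eq_mul, hs]
        field_simp
        simp [Finset.card_univ]
      have hgeig : P.mulVec g = (1:ℝ) • g := by
        funext x
        rw [tm_mulVec]
        have : ∑ y, P x y * g y = (∑ y, P x y * b j y) - s * ∑ y, P x y := by
          rw [Finset.mul_sum, ← Finset.sum_sub_distrib]
          exact Finset.sum_congr rfl fun y _ => by rw [hg]; ring
        rw [this, tm_rowsum G r hreg hr x]
        have h2 := congrFun (heigvec j) x
        rw [tm_mulVec] at h2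
        rw [h2, hμ1]
        simp [hg]
      have hg0 : g = 0 := by
        by_contra hg0
        have hmem : (1:ℝ) ∈ {y : ℝ | ∃ (μ : ℝ) (f : V → ℝ), y = |μ| ∧ f ≠ 0 ∧ (∑ x, f x) = 0 ∧
            (transMatrix G r).mulVec f = μ • f} := ⟨1, g, by norm_num, hg0, hgsum, hgeig⟩
        have := le_csSup (eigenSet_bdd G r hreg) hmem
        rw [secondEigen] at hlam
        linarith
      have hconst : ∀ x, b j x = s := by
        intro x
        have := congrFun hg0 x
        simp only [hg, Pi.zero_apply] at this
        linarith
      rw [hc]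
      calc ∑ x, b j x * f x = ∑ x, s * f x :=
            Finset.sum_congr rfl fun x _ => by rw [hconst x]
        _ = s * ∑ x, f x := by rw [Finset.mul_sum]
        _ = 0 := by rw [hf, mul_zero]
    · -- μ j ≠ 1 : eigenvector sums to zero
      have hsum0 : ∑ x, b j x = 0 := by
        have h1 : ∑ x, P.mulVec (b j) x = ∑ y, b j y := by
          calc ∑ x, P.mulVec (b j) x = ∑ x, ∑ y, P x y * b j y := by
                exact Finset.sum_congr rfl fun x _ => tm_mulVec G r _ x
            _ = ∑ y, (∑ x, P x y) * b j y := by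
                rw [Finset.sum_comm]
                exact Finset.sum_congr rfl fun y _ => by rw [Finset.sum_mul]
            _ = ∑ y, b j y := by
                refine Finset.sum_congr rfl fun y _ => ?_
                rw [hcol y, one_mul]
        have h2 : ∑ x, P.mulVec (b j) x = μ j * ∑ y, b j y := by
          rw [heigvec j]
          simp [Finset.mul_sum]
        have h3 : (μ j - 1) * (∑ y, b j y) = 0 := by
          rw [h1] at h2
          linarith [h2]
        rcases mul_eq_zero.mp h3 with h | h
        · exact absurd (by linarith : μ j = 1) hμ1
        · exact h
      have hmem : |μ j| ∈ {y : ℝ | ∃ (μ : ℝ) (f : V → ℝ), y = |μ| ∧ f ≠ 0 ∧ (∑ x, f x) = 0 ∧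
          (transMatrix G r).mulVec f = μ • f} := ⟨μ j, ⇑(b j), rfl, hbj, hsum0, heigvec j⟩
      have hle : |μ j| ≤ secondEigen G r := le_csSup (eigenSet_bdd G r hreg) hmem
      calc (μ j)^2 = |μ j|^2 := (sq_abs _).symm
        _ ≤ (secondEigen G r)^2 := by
            have h0 : (0:ℝ) ≤ |μ j| := abs_nonneg _
            nlinarith
  -- put everything together
  have e1 : ∑ x, (P.mulVec f x)^2 = ∑ j, (c j * μ j)^2 := by
    rw [Finset.sum_congr rfl fun x _ => by rw [hmul x]]
    exact parseval_aux (fun j => ⇑(b j)) ortho _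
  have e2 : ∑ x, (f x)^2 = ∑ j, (c j)^2 := by
    rw [Finset.sum_congr rfl fun x _ => by rw [hdecomp x]]
    exact parseval_aux (fun j => ⇑(b j)) ortho _
  rw [e1, e2, Finset.mul_sum]
  refine Finset.sum_le_sum fun j _ => ?_
  by_cases hcj : c j = 0
  · simp [hcj]
  · have := habs j hcj
    calc (c j * μ j)^2 = (μ j)^2 * (c j)^2 := by ring
      _ ≤ (secondEigen G r)^2 * (c j)^2 :=
          mul_le_mul_of_nonneg_right this (sq_nonneg _)

end SpecAux

section MainAux
open Finset
variable {V : Type*} [Fintype V] [DecidableEq V]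
variable (G : SimpleGraph V) [DecidableRel G.Adj] (r : ℕ)

private lemma tm_mulVec_ind (A : Finset V) (x : V) :
    ∑ y, transMatrix G r x y * (if y ∈ A then (1:ℝ) else 0) = (degIn G A x : ℝ) / r := by
  have h : ∀ y, transMatrix G r x y * (if y ∈ A then (1:ℝ) else 0)
      = if y ∈ G.neighborFinset x ∩ A then (r:ℝ)⁻¹ else 0 := by
    intro y
    rw [tm_apply]
    by_cases h1 : G.Adj x y <;> by_cases h2 : y ∈ A <;>
      simp [h1, h2, SimpleGraph.mem_neighborFinset]
  rw [Finset.sum_congr rfl fun y _ => h y, Finset.sum_ite_mem, Finset.univ_inter,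
    Finset.sum_const, nsmul_eq_mul, degIn, div_eq_mul_inv]

private lemma degIn_sum (hreg : G.IsRegularOfDegree r) (A : Finset V) :
    ∑ u : V, (degIn G A u : ℝ) = (r : ℝ) * A.card := by
  have h1 : ∀ u, (degIn G A u : ℝ) = ∑ y ∈ A, (if G.Adj u y then (1:ℝ) else 0) := by
    intro u
    have hset : G.neighborFinset u ∩ A = A.filter (fun y => G.Adj u y) := by
      ext y
      simp [SimpleGraph.mem_neighborFinset, Finset.mem_filter, and_comm]
    rw [show degIn G A u = (A.filter (fun y => G.Adj u y)).card from by rw [degIn, hset],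
      Finset.card_filter]
    push_cast
    rfl
  rw [Finset.sum_congr rfl fun u _ => h1 u, Finset.sum_comm]
  have h2 : ∀ y ∈ A, ∑ u : V, (if G.Adj u y then (1:ℝ) else 0) = (r : ℝ) := by
    intro y _
    have hcomm : ∀ u, (if G.Adj u y then (1:ℝ) else 0) = if G.Adj y u then (1:ℝ) else 0 :=
      fun u => if_congr (G.adj_comm u y) rfl rfl
    rw [Finset.sum_congr rfl fun u _ => hcomm u, ← Finset.sum_filter,
      ← SimpleGraph.neighborFinset_eq_filter, Finset.sum_const, nsmul_eq_mul,
      show (G.neighborFinset y).card = r from hreg y, mul_one]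
  rw [Finset.sum_congr rfl h2, Finset.sum_const, nsmul_eq_mul, mul_comm]

end MainAux


/-- Corollary 6 of the paper.  For a connected `r`-regular graph `G`
on `n` vertices with `λ < 1`, `0 < ρ ≤ 1`, and the BIPS process with source `v` and
expected branching factor `1 + ρ`, for every `A ⊆ V` with `v ∈ A`:
`E(|A_{t+1}| | A_t = A) ≥ |A|·(1 + ρ(1-λ²)(1 - |A|/n))`. -/
theorem bips_rho_expected_growth {V : Type*} [Fintype V] [DecidableEq V]
    (G : SimpleGraph V) [DecidableRel G.Adj] (r : ℕ) (hconn : G.Connected)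
    (hreg : G.IsRegularOfDegree r) (hlam : secondEigen G r < 1)
    (ρ : ℝ) (hρ : 0 < ρ) (hρ1 : ρ ≤ 1) (v : V) (A : Finset V) (hv : v ∈ A) :
    (A.card : ℝ) *
        (1 + ρ * (1 - secondEigen G r ^ 2) * (1 - (A.card : ℝ) / (Fintype.card V : ℝ))) ≤
      ∑ B : Finset V, bipsRhoStep G r ρ v A B * (B.card : ℝ) := by
  rw [bips_exp]
  rcases Nat.eq_zero_or_pos r with hr0 | hr
  · -- degenerate case : `r = 0`, so `G` is a single vertex
    subst hr0
    have hnoadj : ∀ x y : V, ¬ G.Adj x y := by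
      intro x y hxy
      have h0 : (G.neighborFinset x).card = 0 := hreg x
      have hy : y ∈ G.neighborFinset x := by simpa using hxy
      rw [Finset.card_eq_zero.mp h0] at hy
      exact absurd hy (Finset.notMem_empty y)
    have hall : ∀ y : V, y = v := by
      intro y
      obtain ⟨w⟩ := hconn.preconnected v y
      cases w with
      | nil => rfl
      | cons h _ => exact absurd h (hnoadj _ _)
    have hcard : Fintype.card V = 1 := Fintype.card_eq_one_iff.mpr ⟨v, hall⟩
    have hA : A = {v} := by
      ext y
      simp only [Finset.mem_singleton]
      constructor
      · intro _; exact hall y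
      · intro h; rw [h]; exact hv
    have herase : (Finset.univ : Finset V).erase v = ∅ := by
      ext y
      simp [hall y]
    rw [herase, hA, hcard]
    norm_num
  · -- main case : `r > 0`
    have hne : Nonempty V := ⟨v⟩
    have hn : (0:ℝ) < (Fintype.card V : ℝ) := by exact_mod_cast Fintype.card_pos
    have hrR : (0:ℝ) < (r : ℝ) := by exact_mod_cast hr
    set lam : ℝ := secondEigen G r with hlamdef
    set n : ℝ := (Fintype.card V : ℝ) with hndef
    set a : ℝ := (A.card : ℝ) with hadef
    set q : V → ℝ := fun u => (degIn G A u : ℝ) / r with hqdef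
    have hq0 : ∀ u, 0 ≤ q u := fun u => by positivity
    have hq1 : ∀ u, q u ≤ 1 := by
      intro u
      rw [hqdef, div_le_one hrR]
      have : degIn G A u ≤ G.degree u := Finset.card_le_card (Finset.inter_subset_left)
      rw [hreg u] at this
      exact_mod_cast this
    have hp : ∀ u, pInfRho G r ρ A u = q u + ρ * (q u - q u ^ 2) := by
      intro u
      rw [pInfRho, hqdef, mul_div_assoc]
      ring
    have hqsum : ∑ u, q u = a := by
      simp only [hqdef]
      rw [← Finset.sum_div, degIn_sum G r hreg A, mul_comm, mul_div_assoc,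
        div_self hrR.ne', mul_one, hadef]
    set Q : ℝ := ∑ u, (q u)^2 with hQdef
    -- spectral estimate
    set f : V → ℝ := fun x => (if x ∈ A then (1:ℝ) else 0) - a / n with hfdef
    have hind : ∑ x : V, (if x ∈ A then (1:ℝ) else 0) = a := by
      rw [Finset.sum_ite_mem, Finset.univ_inter, Finset.sum_const, nsmul_eq_mul, mul_one, hadef]
    have hfsum : ∑ x, f x = 0 := by
      rw [hfdef]
      rw [Finset.sum_sub_distrib, hind, Finset.sum_const, nsmul_eq_mul]
      field_simp
      simp [Finset.card_univ, hndef]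
    have hPf : ∀ x, (transMatrix G r).mulVec f x = q x - a / n := by
      intro x
      rw [tm_mulVec, hfdef]
      have : ∀ y : V, transMatrix G r x y * ((if y ∈ A then (1:ℝ) else 0) - a / n)
          = transMatrix G r x y * (if y ∈ A then (1:ℝ) else 0)
            - (a / n) * transMatrix G r x y := fun y => by ring
      rw [Finset.sum_congr rfl fun y _ => this y, Finset.sum_sub_distrib,
        tm_mulVec_ind G r A x, ← Finset.mul_sum, tm_rowsum G r hreg hr x, mul_one, hqdef]
    have hspec := spectral_bound G r hreg hr hlam f hfsum
    have hsub : ∀ (g : V → ℝ) (cst : ℝ), ∑ x, (g x - cst)^2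
        = (∑ x, (g x)^2) - 2*cst*(∑ x, g x) + n * cst^2 := by
      intro g cst
      have h : ∀ x : V, (g x - cst)^2 = ((g x)^2 - 2*cst*(g x)) + cst^2 := fun x => by ring
      rw [Finset.sum_congr rfl fun x _ => h x, Finset.sum_add_distrib,
        Finset.sum_sub_distrib, Finset.sum_const, nsmul_eq_mul, ← Finset.mul_sum,
        Finset.card_univ, hndef]
    set t : ℝ := a / n with htdef
    have hnt : n * t^2 = a * t := by
      rw [htdef]
      field_simp
    have hlhs : ∑ x, ((transMatrix G r).mulVec f x)^2 = Q - a * t := by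
      rw [Finset.sum_congr rfl fun x _ => by rw [hPf x], hsub q (a/n), hqsum, ← htdef, hQdef]
      linarith [hnt]
    have hindsq : ∑ x : V, (if x ∈ A then (1:ℝ) else 0)^2 = a := by
      rw [← hind]
      refine Finset.sum_congr rfl fun x _ => ?_
      split <;> norm_num
    have hrhs : ∑ x, (f x)^2 = a - a * t := by
      rw [hfdef]
      rw [hsub (fun x => if x ∈ A then (1:ℝ) else 0) (a/n), hindsq, hind, ← htdef]
      linarith [hnt]
    rw [hlhs, hrhs] at hspec
    -- bounds on the infection probabilities
    have hpv : pInfRho G r ρ A v ≤ 1 := by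
      rw [hp v]
      nlinarith [hq0 v, hq1 v, hρ.le, hρ1,
        mul_le_mul_of_nonneg_left (hq1 v) hρ.le, mul_nonneg hρ.le (hq0 v)]
    have hsump : ∑ u ∈ Finset.univ.erase v, pInfRho G r ρ A u
        = (∑ u, pInfRho G r ρ A u) - pInfRho G r ρ A v := by
      have := Finset.add_sum_erase Finset.univ (pInfRho G r ρ A) (Finset.mem_univ v)
      linarith
    have hsumall : ∑ u, pInfRho G r ρ A u = a + ρ * (a - Q) := by
      rw [Finset.sum_congr rfl fun u _ => hp u, Finset.sum_add_distrib, hqsum,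
        ← Finset.mul_sum, Finset.sum_sub_distrib, hqsum, hQdef]
    rw [hsump, hsumall]
    have hkey : ρ * ((1 - lam^2) * (a - a*t)) ≤ ρ * (a - Q) := by
      apply mul_le_mul_of_nonneg_left _ hρ.le
      nlinarith [hspec]
    nlinarith [hkey, hpv]
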